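/- Let m be a universal probability and q > 1. Then the Tsallis entropy S_q(m) = (1/(q-1)) ∑_{s∈{0,1}*} (m(s) - m(s)^q) converges; if instead 0 < q < 1, then S_q(m) diverges to infinity. -/

import Mathlib

open Filter Topology

namespace Paper

/-- Finite binary strings. -/
abbrev Str := List Bool

/-- A computer: a partial recursive function on binary strings with prefix-free domain. -/
structure Computer where
  f : Str →. Str
  partrec : Partrec f
  prefixFree : ∀ p q : Str, (f p).Dom → (f q).Dom → p <+: q → p = q

/-- An optimal computer (universal self-delimiting Turing machine). -/
structure OptimalComputer extends Computer where
  optimal : ∀ C : Computer, ∃ sim : ℕ, ∀ p s, s ∈ C.f p →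
    ∃ p', s ∈ toComputer.f p' ∧ p'.length ≤ p.length + sim

/-- Prefix-free Kolmogorov complexity (program-size complexity) w.r.t. `U`. -/
noncomputable def Kc (U : OptimalComputer) (s : Str) : ℕ :=
  sInf {n | ∃ p : Str, p.length = n ∧ s ∈ U.f p}

/-- A semi-measure on binary strings: values in [0,1] with all finite partial sums ≤ 1. -/
def SemiMeasure (r : Str → ℝ) : Prop :=
  (∀ s, 0 ≤ r s ∧ r s ≤ 1) ∧ ∀ F : Finset Str, ∑ s ∈ F, r s ≤ 1

/-- Lower-computability: approximability from below by a total recursive rational function. -/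
def LowerComputable (r : Str → ℝ) : Prop :=
  ∃ f : ℕ → Str → ℚ, Computable₂ f ∧
    ∀ s : Str, (∀ n : ℕ, 0 ≤ f n s ∧ (f n s : ℝ) ≤ r s) ∧
      Tendsto (fun n => (f n s : ℝ)) atTop (nhds (r s))

/-- A lower-computable semi-measure. -/
def LCSemiMeasure (r : Str → ℝ) : Prop := SemiMeasure r ∧ LowerComputable r

/-- A universal probability: a lower-computable semi-measure dominating all
lower-computable semi-measures up to a positive multiplicative constant. -/
def UniversalProb (m : Str → ℝ) : Prop :=
  LCSemiMeasure m ∧ ∀ r : Str → ℝ, LCSemiMeasure r → ∃ c : ℝ, 0 < c ∧ ∀ s, c * r s ≤ m s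

/-- The first `n` bits of the base-two expansion of `T mod 1`
(the expansion with infinitely many zeros). -/
noncomputable def binPrefix (T : ℝ) (n : ℕ) : Str :=
  (List.range n).map (fun i => decide (⌊Int.fract T * 2 ^ (i + 1)⌋ % 2 = 1))

/-- A real is right-computable if it is the limit from above of a recursive
sequence of rationals. -/
def RightComputableReal (T : ℝ) : Prop :=
  ∃ g : ℕ → ℚ, Computable g ∧ (∀ n, T ≤ (g n : ℝ)) ∧
    Tendsto (fun n => (g n : ℝ)) atTop (nhds T)

/-- A real is left-computable if its negation is right-computable. -/
def LeftComputableReal (T : ℝ) : Prop := RightComputableReal (-T)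

/-- A computable real number. -/
def ComputableReal (T : ℝ) : Prop :=
  ∃ f : ℕ → ℚ, Computable f ∧ ∀ n : ℕ, |T - (f n : ℝ)| < (2 : ℝ)⁻¹ ^ n

/-- A recursively enumerable set of binary strings. -/
def REset (A : Set Str) : Prop :=
  ∃ g : Str →. Unit, Partrec g ∧ ∀ s, (g s).Dom ↔ s ∈ A

/-- `T` is weakly Chaitin `D`-random. -/
noncomputable def WeaklyChaitinDRandom (U : OptimalComputer) (D T : ℝ) : Prop :=
  ∃ c : ℕ, ∀ n : ℕ, D * n - c ≤ Kc U (binPrefix T n)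

/-- `T` is `D`-compressible. -/
noncomputable def DCompressible (U : OptimalComputer) (D T : ℝ) : Prop :=
  Filter.atTop.limsup (fun n : ℕ => (Kc U (binPrefix T n) : ℝ) / n) ≤ D


noncomputable def eOld : ℚ → ℕ := @Encodable.encode ℚ Rat.instEncodable

lemma eOld_eq (x : ℚ) : eOld x = Nat.pair (Equiv.intEquivNat x.num) x.den := rfl

def NA (a : ℕ) : ℕ := a / 2 + a % 2

lemma NA_intEquivNat (i : ℤ) : NA (Equiv.intEquivNat i) = i.natAbs := by
  cases i with
  | ofNat n => show NA (2 * n) = n; simp [NA, Nat.mul_div_cancel_left, Nat.mul_mod_right]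
  | negSucc n => show NA (2 * n + 1) = n + 1; simp [NA]; omega

def divCntAux (a b : ℕ) : ℕ → ℕ :=
  Nat.rec 0 (fun y ih => ih + (if (y + 2) ∣ a ∧ (y + 2) ∣ b then 1 else 0))

lemma divCntAux_eq_zero_iff (a b n : ℕ) :
    divCntAux a b n = 0 ↔ ∀ y < n, ¬((y + 2) ∣ a ∧ (y + 2) ∣ b) := by
  induction n with
  | zero => simp [divCntAux]
  | succ n ih =>
    have hstep : divCntAux a b (n+1)
        = divCntAux a b n + (if (n + 2) ∣ a ∧ (n + 2) ∣ b then 1 else 0) := rfl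
    rw [hstep]
    constructor
    · intro h
      rw [Nat.add_eq_zero] at h
      intro y hy
      rcases Nat.lt_succ_iff_lt_or_eq.mp hy with h'|h'
      · exact (ih.mp h.1) y h'
      · subst h'; intro hc; simp [hc] at h
    · intro h
      have h1 : divCntAux a b n = 0 := ih.mpr (fun y hy => h y (hy.trans (Nat.lt_succ_self _)))
      have h2 : ¬((n + 2) ∣ a ∧ (n + 2) ∣ b) := h n (Nat.lt_succ_self n)
      simp [h1, h2]

def divCnt (a b : ℕ) : ℕ := divCntAux a b b

lemma coprime_iff_divCnt {a b : ℕ} (hb : 0 < b) : Nat.Coprime a b ↔ divCnt a b = 0 := by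
  rw [divCnt, divCntAux_eq_zero_iff]
  constructor
  · intro h y _ ⟨h1, h2⟩
    have hd : (y+2) ∣ Nat.gcd a b := Nat.dvd_gcd h1 h2
    rw [h] at hd
    have := Nat.le_of_dvd one_pos hd; omega
  · intro h
    by_contra hc
    have hg : 2 ≤ Nat.gcd a b := by
      have h1 : Nat.gcd a b ≠ 1 := hc
      have h0 : Nat.gcd a b ≠ 0 := by
        intro h0; rw [Nat.gcd_eq_zero_iff] at h0; omega
      omega
    have hgle : Nat.gcd a b ≤ b := Nat.le_of_dvd hb (Nat.gcd_dvd_right a b)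
    refine h (Nat.gcd a b - 2) (by omega) ⟨?_, ?_⟩
    · have := Nat.gcd_dvd_left a b; rwa [Nat.sub_add_cancel hg]
    · have := Nat.gcd_dvd_right a b; rwa [Nat.sub_add_cancel hg]

def Q (m : ℕ) : Bool :=
  decide (0 < m.unpair.2) && (divCnt (NA m.unpair.1) m.unpair.2 == 0)

lemma Q_correct (m : ℕ) :
    Q m = @decide (m ∈ Set.range (@Encodable.encode ℚ Rat.instEncodable))
      (@Encodable.decidableRangeEncode ℚ Rat.instEncodable m) := by
  rw [Bool.eq_iff_iff]
  simp only [decide_eq_true_eq]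
  constructor
  · intro h
    simp only [Q, Bool.and_eq_true, decide_eq_true_eq, beq_iff_eq] at h
    obtain ⟨hb, hd⟩ := h
    set i : ℤ := Equiv.intEquivNat.symm m.unpair.1 with hi
    have hcop : i.natAbs.Coprime m.unpair.2 := by
      rw [coprime_iff_divCnt hb, ← NA_intEquivNat i, hi, Equiv.apply_symm_apply]
      exact hd
    refine ⟨⟨i, m.unpair.2, by omega, hcop⟩, ?_⟩
    show Nat.pair (Equiv.intEquivNat i) m.unpair.2 = m
    rw [hi, Equiv.apply_symm_apply, Nat.pair_unpair]
  · rintro ⟨x, rfl⟩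
    have : @Encodable.encode ℚ Rat.instEncodable x = Nat.pair (Equiv.intEquivNat x.num) x.den :=
      rfl
    rw [this]
    simp only [Q, Nat.unpair_pair, NA_intEquivNat]
    simp [x.pos, (coprime_iff_divCnt x.pos).mp x.reduced]


def cnt : ℕ → ℕ :=
  Nat.rec 0 (fun y ih => ih + cond (Q y) 1 0)

lemma cnt_eq (z : ℕ) :
    cnt z = (List.range z).countP
      (fun m => @decide (m ∈ Set.range (@Encodable.encode ℚ Rat.instEncodable))
        (@Encodable.decidableRangeEncode ℚ Rat.instEncodable m)) := by
  induction z with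
  | zero => simp [cnt]
  | succ z ih =>
    have hstep : cnt (z+1) = cnt z + cond (Q z) 1 0 := rfl
    rw [hstep, List.range_succ, List.countP_append, ih, List.countP_cons, List.countP_nil]
    rw [Q_correct z]
    cases @decide (z ∈ Set.range (@Encodable.encode ℚ Rat.instEncodable))
        (@Encodable.decidableRangeEncode ℚ Rat.instEncodable z) <;> simp

lemma encode_eq_cnt (x : ℚ) :
    @Encodable.encode ℚ (Primcodable.toEncodable (α := ℚ)) x
      = cnt (Nat.pair (Equiv.intEquivNat x.num) x.den) := by
  have h0 : @Encodable.encode ℚ (Primcodable.toEncodable (α := ℚ)) x =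
      (List.range (@Encodable.encode ℚ Rat.instEncodable x)).countP
        (fun m => @decide (m ∈ Set.range (@Encodable.encode ℚ Rat.instEncodable))
          (@Encodable.decidableRangeEncode ℚ Rat.instEncodable m)) := rfl
  rw [h0, ← cnt_eq]
  rfl

lemma primrec_NA : Primrec NA :=
  Primrec.nat_add.comp (Primrec.nat_div.comp .id (.const 2))
    (Primrec.nat_mod.comp .id (.const 2))

lemma primrec_dvd : PrimrecRel (fun (a b : ℕ) => a ∣ b) :=
  (Primrec.eq.comp (Primrec.nat_mod.comp Primrec.snd Primrec.fst) (Primrec.const 0)).of_eq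
    (fun p => by simp [Nat.dvd_iff_mod_eq_zero])

def step1 (p : ℕ × ℕ) (q : ℕ × ℕ) : ℕ :=
  q.2 + (if (q.1 + 2) ∣ p.1 ∧ (q.1 + 2) ∣ p.2 then 1 else 0)

lemma primrec_step1 : Primrec₂ step1 := by
  apply Primrec₂.mk
  apply Primrec.nat_add.comp (Primrec.snd.comp Primrec.snd)
  apply Primrec.ite _ (Primrec.const 1) (Primrec.const 0)
  have hs : Primrec (fun q : (ℕ × ℕ) × ℕ × ℕ => q.2.1 + 2) :=
    (Primrec.nat_add.comp .id (.const 2)).comp (Primrec.fst.comp Primrec.snd)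
  exact PrimrecPred.and
    (primrec_dvd.comp hs (Primrec.fst.comp Primrec.fst))
    (primrec_dvd.comp hs (Primrec.snd.comp Primrec.fst))

lemma primrec_divCnt : Primrec (fun p : ℕ × ℕ => divCnt p.1 p.2) := by
  have h := Primrec.nat_rec' (f := fun p : ℕ × ℕ => p.2) (g := fun _ => (0:ℕ))
    (h := step1) Primrec.snd (Primrec.const 0) primrec_step1
  exact h.of_eq (fun p => by
    rfl)

lemma primrec_Q : Primrec Q := by
  have h1 : Primrec (fun m : ℕ => m.unpair.1) := Primrec.fst.comp Primrec.unpair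
  have h2 : Primrec (fun m : ℕ => m.unpair.2) := Primrec.snd.comp Primrec.unpair
  have hlt : Primrec (fun m : ℕ => decide (0 < m.unpair.2)) :=
    (Primrec.nat_lt.comp (Primrec.const 0) h2).decide
  have hdc : Primrec (fun m : ℕ => divCnt (NA m.unpair.1) m.unpair.2 == 0) :=
    (Primrec.beq (α := ℕ)).comp
      (primrec_divCnt.comp (Primrec.pair (primrec_NA.comp h1) h2)) (Primrec.const 0)
  exact (Primrec.cond hlt hdc (Primrec.const false)).of_eq (fun m => by
    simp only [Q]
    cases decide (0 < m.unpair.2) <;> simp)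

def step2 (_ : ℕ) (q : ℕ × ℕ) : ℕ := q.2 + cond (Q q.1) 1 0

lemma primrec_step2 : Primrec₂ step2 := by
  apply Primrec₂.mk
  apply Primrec.nat_add.comp (Primrec.snd.comp Primrec.snd)
  exact Primrec.cond (primrec_Q.comp (Primrec.fst.comp Primrec.snd))
    (Primrec.const 1) (Primrec.const 0)

lemma primrec_cnt : Primrec cnt := by
  have h := Primrec.nat_rec' (f := fun z : ℕ => z) (g := fun _ => (0:ℕ))
    (h := step2) Primrec.id (Primrec.const 0) primrec_step2
  exact h.of_eq (fun z => by
    rfl)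

def dd (k : ℕ) : ℕ := 2 ^ (k + 1) * (k + 1) ^ 2

lemma dd_pos (k : ℕ) : 0 < dd k := by unfold dd; positivity

def gq (k : ℕ) : ℚ :=
  ⟨1, dd k, (dd_pos k).ne', by simp [Int.natAbs_one, Nat.coprime_one_left]⟩

lemma primrec_dd : Primrec dd :=
  Primrec.nat_mul.comp
    ((Primrec₂.unpaired'.mp Nat.Primrec.pow).comp (Primrec.const 2) Primrec.succ)
    ((Primrec₂.unpaired'.mp Nat.Primrec.pow).comp Primrec.succ (Primrec.const 2))

lemma primrec_gq : Primrec gq := by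
  rw [← Primrec.encode_iff]
  have h : Primrec (fun k => cnt (Nat.pair 2 (dd k))) :=
    primrec_cnt.comp (Primrec₂.natPair.comp (Primrec.const 2) primrec_dd)
  exact h.of_eq (fun k => by
    rw [encode_eq_cnt (gq k)]
    rfl)

noncomputable def rr (s : Str) : ℝ := ((dd s.length : ℝ))⁻¹

lemma rr_pos (s : Str) : 0 < rr s := by
  have := dd_pos s.length
  unfold rr; positivity

lemma rr_le_one (s : Str) : rr s ≤ 1 := by
  unfold rr
  rw [inv_le_one_iff₀]
  right
  exact_mod_cast (dd_pos s.length)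

-- card of strings of given length in a finset
lemma card_filter_len (F : Finset Str) (n : ℕ) :
    (F.filter (fun s => s.length = n)).card ≤ 2 ^ n := by
  have hinj : Set.InjOn (fun s : Str => fun i : Fin n => s.getD i false)
      (F.filter (fun s => s.length = n)) := by
    intro s hs t ht hst
    simp only [Finset.coe_filter, Set.mem_setOf_eq] at hs ht
    apply List.ext_getElem (hs.2.trans ht.2.symm)
    intro i h1 h2
    have hi : i < n := hs.2 ▸ h1
    have := congrFun hst ⟨i, hi⟩
    simpa [List.getD_eq_getElem, h1, h2] using this
  have h := Finset.card_le_card_of_injOn (fun s : Str => fun i : Fin n => s.getD i false)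
    (fun s _ => Finset.mem_univ _) hinj
  simpa using h

lemma rr_sum_le (F : Finset Str) : ∑ s ∈ F, rr s ≤ 1 := by
  classical
  set N := F.sup (fun s => s.length) + 1 with hN
  have hmap : ∀ s ∈ F, s.length ∈ Finset.range N := by
    intro s hs
    simp only [Finset.mem_range, hN]
    exact Nat.lt_succ_of_le (Finset.le_sup hs)
  rw [← Finset.sum_fiberwise_of_maps_to hmap]
  have hfiber : ∀ n ∈ Finset.range N,
      ∑ s ∈ F.filter (fun s => s.length = n), rr s ≤ ((n:ℝ)+1)⁻¹ - ((n:ℝ)+2)⁻¹ := by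
    intro n _
    have h1 : ∑ s ∈ F.filter (fun s => s.length = n), rr s
        = (F.filter (fun s => s.length = n)).card * ((dd n : ℝ))⁻¹ := by
      rw [Finset.sum_congr rfl (fun s hs => ?_), Finset.sum_const, nsmul_eq_mul]
      have := (Finset.mem_filter.mp hs).2
      rw [rr, this]
    rw [h1]
    have h2 : ((F.filter (fun s => s.length = n)).card : ℝ) ≤ 2 ^ n := by
      exact_mod_cast card_filter_len F n
    have h3 : ((F.filter (fun s => s.length = n)).card : ℝ) * ((dd n : ℝ))⁻¹
        ≤ 2 ^ n * ((dd n : ℝ))⁻¹ := by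
      have := dd_pos n
      gcongr
    refine h3.trans ?_
    have hdd : (dd n : ℝ) = 2 ^ (n+1) * ((n:ℝ)+1) ^ 2 := by
      unfold dd; push_cast; ring
    rw [hdd]
    rw [mul_inv, ← mul_assoc]
    have hp : (2:ℝ) ^ n * ((2:ℝ) ^ (n+1))⁻¹ = 2⁻¹ := by
      rw [pow_succ]
      field_simp
    rw [hp]
    -- 2⁻¹ * ((n+1)^2)⁻¹ ≤ 1/(n+1) - 1/(n+2)
    have hn1 : (0:ℝ) < (n:ℝ) + 1 := by positivity
    have hn2 : (0:ℝ) < (n:ℝ) + 2 := by positivity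
    rw [inv_sub_inv hn1.ne' hn2.ne']
    have : ((n:ℝ)+2) - ((n:ℝ)+1) = 1 := by ring
    rw [this]
    rw [div_eq_mul_inv, one_mul]
    rw [← mul_inv]
    apply inv_anti₀
    · positivity
    · nlinarith
  calc ∑ n ∈ Finset.range N, ∑ s ∈ F.filter (fun s => s.length = n), rr s
      ≤ ∑ n ∈ Finset.range N, (((n:ℝ)+1)⁻¹ - ((n:ℝ)+2)⁻¹) := Finset.sum_le_sum hfiber
    _ = ∑ n ∈ Finset.range N,
          ((fun k : ℕ => ((k:ℝ)+1)⁻¹) n - (fun k : ℕ => ((k:ℝ)+1)⁻¹) (n+1)) := by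
        apply Finset.sum_congr rfl
        intro n _
        push_cast
        ring_nf
    _ = (fun k : ℕ => ((k:ℝ)+1)⁻¹) 0 - (fun k : ℕ => ((k:ℝ)+1)⁻¹) N :=
        Finset.sum_range_sub' (fun k : ℕ => ((k:ℝ)+1)⁻¹) N
    _ ≤ 1 := by
        simp only [Nat.cast_zero, zero_add, inv_one]
        have : (0:ℝ) ≤ ((N:ℝ)+1)⁻¹ := by positivity
        linarith

-- growth lemma
lemma growth (b : ℝ) (hb : 1 < b) (C : ℝ) : ∃ n : ℕ, C * ((n:ℝ)+1)^2 ≤ b ^ n := by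
  rcases le_or_gt C 0 with hC | hC
  · exact ⟨0, by nlinarith⟩
  · set u := b ^ ((1:ℝ)/3) with hu
    have hu1 : 1 < u := by
      rw [hu]
      exact (Real.one_lt_rpow_iff_of_pos (by linarith)).mpr (Or.inl ⟨hb, by norm_num⟩)
    set δ := u - 1 with hδ
    have hδ0 : 0 < δ := by linarith
    have hcube : ∀ n : ℕ, (u ^ n) ^ 3 = b ^ n := by
      intro n
      have h1 : u ^ n = b ^ (((1:ℝ)/3) * n) := by
        rw [hu, ← Real.rpow_natCast (b ^ ((1:ℝ)/3)) n, ← Real.rpow_mul (by linarith)]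
      have h2 : (u ^ n) ^ 3 = b ^ ((((1:ℝ)/3) * n) * 3) := by
        rw [h1, ← Real.rpow_natCast (b ^ (((1:ℝ)/3) * n)) 3, ← Real.rpow_mul (by linarith)]
        norm_num
      rw [h2]
      have : (((1:ℝ)/3) * n) * 3 = (n : ℝ) := by ring
      rw [this, Real.rpow_natCast]
    obtain ⟨n0, hn0⟩ := exists_nat_ge (4 * C / δ^3)
    set n := max n0 1 with hn
    refine ⟨n, ?_⟩
    have hn1 : 1 ≤ n := le_max_right _ _
    have hnn0 : (n0 : ℝ) ≤ n := by exact_mod_cast le_max_left _ _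
    have hb1 : δ * n ≥ δ * 1 := by
      have : (1:ℝ) ≤ (n:ℝ) := by exact_mod_cast hn1
      nlinarith
    have hbern : 1 + (n:ℝ) * δ ≤ u ^ n := by
      have := one_add_mul_le_pow (a := δ) (by linarith) n
      simpa [hδ] using this
    have hun : δ * n ≤ u ^ n := by nlinarith
    have hδn : 0 < δ * n := by
      have : (0:ℝ) < (n:ℝ) := by exact_mod_cast Nat.lt_of_lt_of_le Nat.zero_lt_one hn1
      positivity
    have hcube' : (δ * n)^3 ≤ b ^ n := by
      rw [← hcube n]
      gcongr

    -- (δ n)^3 = δ^3 n · n^2 ≥ 4C n^2 ≥ C (n+1)^2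
    have h4C : 4 * C ≤ δ^3 * n := by
      have := hn0
      rw [div_le_iff₀ (by positivity)] at this
      nlinarith [this, hnn0, hδ0, pow_pos hδ0 3]
    have hsq : ((n:ℝ)+1)^2 ≤ 4 * (n:ℝ)^2 := by
      have : (1:ℝ) ≤ (n:ℝ) := by exact_mod_cast hn1
      nlinarith
    calc C * ((n:ℝ)+1)^2 ≤ C * (4 * (n:ℝ)^2) := by nlinarith
      _ = (4 * C) * (n:ℝ)^2 := by ring
      _ ≤ (δ^3 * n) * (n:ℝ)^2 := by nlinarith [sq_nonneg (n:ℝ)]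
      _ = (δ * n)^3 := by ring
      _ ≤ b ^ n := hcube'

-- the finset of strings of length n
def En (n : ℕ) : Finset Str := (Finset.univ : Finset (Fin n → Bool)).image List.ofFn

lemma mem_En {n : ℕ} {s : Str} (hs : s ∈ En n) : s.length = n := by
  rw [En, Finset.mem_image] at hs
  obtain ⟨v, _, rfl⟩ := hs
  simp

lemma card_En (n : ℕ) : (En n).card = 2 ^ n := by
  rw [En, Finset.card_image_of_injective _ (List.ofFn_injective), Finset.card_univ]
  simp

lemma gq_cast (k : ℕ) : ((gq k : ℚ) : ℝ) = ((dd k : ℝ))⁻¹ := by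
  rw [Rat.cast_def]
  have h1 : (gq k).num = 1 := rfl
  have h2 : (gq k).den = dd k := rfl
  rw [h1, h2]
  simp [one_div]

lemma gq_nonneg (k : ℕ) : (0:ℚ) ≤ gq k := by
  rw [← Rat.num_nonneg]
  norm_num [show (gq k).num = 1 from rfl]

lemma lcsemi_rr : LCSemiMeasure rr := by
  refine ⟨⟨fun s => ⟨(rr_pos s).le, rr_le_one s⟩, rr_sum_le⟩, ?_⟩
  refine ⟨fun _ s => gq s.length, ?_, ?_⟩
  · exact Primrec₂.to_comp
      (Primrec.to₂ (primrec_gq.comp (Primrec.list_length.comp Primrec.snd)))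
  · intro s
    constructor
    · intro n
      refine ⟨gq_nonneg _, ?_⟩
      rw [gq_cast]
      exact le_of_eq rfl
    · rw [show (fun n : ℕ => ((gq s.length : ℚ) : ℝ)) = (fun _ => rr s) from ?_]
      · exact tendsto_const_nhds
      · funext n
        rw [gq_cast]; rfl

/-- The Tsallis entropy `S_q(m) = ∑ s, (m s - m s ^ q)/(q-1)` of a universal
probability `m` converges for `q > 1` and diverges to infinity for `0 < q < 1`. -/
theorem tsallis_entropy_conv_div (m : Str → ℝ) (hm : UniversalProb m) (q : ℝ) :
    (1 < q → Summable (fun s => (m s - m s ^ q) / (q - 1))) ∧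
    (0 < q → q < 1 →
      ∀ B : ℝ, ∃ F : Finset Str, B ≤ ∑ s ∈ F, (m s - m s ^ q) / (q - 1)) := by
  obtain ⟨⟨⟨hbnd, hfin⟩, _hlc⟩, huniv⟩ := hm
  constructor
  · -- convergence for q > 1
    intro hq
    have hsm : Summable m := summable_of_sum_le (fun s => (hbnd s).1) hfin
    have hterm : ∀ s, 0 ≤ m s - m s ^ q := by
      intro s
      rcases eq_or_lt_of_le (hbnd s).1 with h0 | h0
      · rw [← h0, Real.zero_rpow (by linarith : q ≠ 0)]
        simp
      · have : m s ^ q ≤ m s ^ (1:ℝ) :=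
          Real.rpow_le_rpow_of_exponent_ge h0 (hbnd s).2 (by linarith)
        rw [Real.rpow_one] at this
        linarith
    apply Summable.of_nonneg_of_le
      (fun s => div_nonneg (hterm s) (by linarith))
      (fun s => ?_) (hsm.div_const (q-1))
    have h0q : (0:ℝ) ≤ m s ^ q := Real.rpow_nonneg (hbnd s).1 q
    exact (div_le_div_iff_of_pos_right (by linarith : (0:ℝ) < q - 1)).mpr (by linarith)
  · -- divergence for 0 < q < 1
    intro hq0 hq1 B
    obtain ⟨c, hc0, hc⟩ := huniv rr lcsemi_rr
    have h1q : (0:ℝ) < 1 - q := by linarith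
    set b : ℝ := (2:ℝ) ^ (1 - q) with hb
    have hb1 : 1 < b := by
      rw [hb]
      exact Real.one_lt_rpow_iff_of_pos (by norm_num) |>.mpr (Or.inl ⟨one_lt_two, h1q⟩)
    set K : ℝ := c ^ q * ((2:ℝ) ^ q)⁻¹ with hK
    have hK0 : 0 < K := by
      have h2q : (0:ℝ) < (2:ℝ) ^ q := Real.rpow_pos_of_pos two_pos q
      have hcq : (0:ℝ) < c ^ q := Real.rpow_pos_of_pos hc0 q
      positivity
    set C₀ : ℝ := B * (1 - q) + 1 with hC₀
    obtain ⟨n, hn⟩ := growth b hb1 (C₀ / K)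
    -- key lower bound on the sum of m^q over strings of length n
    have hlow : ∀ s ∈ En n, (c * ((dd n : ℝ))⁻¹) ^ q ≤ m s ^ q := by
      intro s hs
      have hlen := mem_En hs
      have h1 : c * rr s ≤ m s := hc s
      have h2 : (0:ℝ) ≤ c * rr s := mul_nonneg hc0.le (rr_pos s).le
      have : c * rr s = c * ((dd n : ℝ))⁻¹ := by rw [rr, hlen]
      rw [← this]
      exact Real.rpow_le_rpow h2 h1 hq0.le
    have hsum_low : (2:ℝ) ^ n * (c * ((dd n : ℝ))⁻¹) ^ q ≤ ∑ s ∈ En n, m s ^ q := by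
      calc (2:ℝ) ^ n * (c * ((dd n : ℝ))⁻¹) ^ q
          = ∑ _s ∈ En n, (c * ((dd n : ℝ))⁻¹) ^ q := by
            rw [Finset.sum_const, card_En, nsmul_eq_mul]
            push_cast
            ring
        _ ≤ ∑ s ∈ En n, m s ^ q := Finset.sum_le_sum hlow
    -- estimate the constant term
    have hdd0 : (0:ℝ) < (dd n : ℝ) := by exact_mod_cast dd_pos n
    have hddq : ((dd n : ℝ)) ^ q ≤ (2:ℝ) ^ (((n:ℝ)+1) * q) * ((n:ℝ)+1)^2 := by
      have hdd : (dd n : ℝ) = 2 ^ (n+1) * ((n:ℝ)+1) ^ 2 := by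
        unfold dd; push_cast; ring
      rw [hdd, Real.mul_rpow (by positivity) (by positivity)]
      have h1 : ((2:ℝ) ^ (n+1)) ^ q = (2:ℝ) ^ (((n:ℝ)+1) * q) := by
        rw [← Real.rpow_natCast (2:ℝ) (n+1), ← Real.rpow_mul (by norm_num)]
        push_cast
        ring_nf
      have h2 : (((n:ℝ)+1) ^ 2) ^ q ≤ ((n:ℝ)+1)^2 := by
        have hbase : (1:ℝ) ≤ ((n:ℝ)+1)^2 := by nlinarith [Nat.cast_nonneg (α := ℝ) n]
        calc (((n:ℝ)+1) ^ 2) ^ q ≤ (((n:ℝ)+1) ^ 2) ^ (1:ℝ) :=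
              Real.rpow_le_rpow_of_exponent_le hbase (by linarith)
          _ = ((n:ℝ)+1)^2 := Real.rpow_one _
      calc ((2:ℝ) ^ (n+1)) ^ q * (((n:ℝ)+1) ^ 2) ^ q
          ≤ ((2:ℝ) ^ (n+1)) ^ q * ((n:ℝ)+1)^2 := by
            apply mul_le_mul_of_nonneg_left h2 (Real.rpow_nonneg (by positivity) q)
        _ = (2:ℝ) ^ (((n:ℝ)+1) * q) * ((n:ℝ)+1)^2 := by rw [h1]
    have hKb : K * b ^ n / (((n:ℝ)+1)^2) ≤ (2:ℝ) ^ n * (c * ((dd n : ℝ))⁻¹) ^ q := by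
      rw [Real.mul_rpow hc0.le (by positivity), Real.inv_rpow hdd0.le]
      have hq2 : (0:ℝ) < ((dd n : ℝ)) ^ q := Real.rpow_pos_of_pos hdd0 q
      have hcq : (0:ℝ) < c ^ q := Real.rpow_pos_of_pos hc0 q
      have step1 : K * b ^ n / (((n:ℝ)+1)^2)
          = c ^ q * ((2:ℝ) ^ n / ((2:ℝ) ^ (((n:ℝ)+1) * q) * ((n:ℝ)+1)^2)) := by
        have hbn : b ^ n = (2:ℝ) ^ ((1-q) * (n:ℝ)) := by
          rw [hb, ← Real.rpow_natCast ((2:ℝ) ^ (1-q)) n, ← Real.rpow_mul (by norm_num)]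
        have h2n : (2:ℝ) ^ n = (2:ℝ) ^ ((n:ℝ)) := (Real.rpow_natCast 2 n).symm
        have hkey : ((2:ℝ)^q)⁻¹ * (2:ℝ)^((1-q)*(n:ℝ)) = (2:ℝ)^((n:ℝ)) / (2:ℝ)^(((n:ℝ)+1)*q) := by
          rw [← Real.rpow_neg (by norm_num), ← Real.rpow_add two_pos, div_eq_mul_inv,
            ← Real.rpow_neg (by norm_num), ← Real.rpow_add two_pos]
          congr 1
          ring
        rw [hbn, hK, h2n]
        calc c ^ q * ((2:ℝ)^q)⁻¹ * (2:ℝ)^((1-q)*(n:ℝ)) / (((n:ℝ)+1)^2)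
            = c ^ q * ((((2:ℝ)^q)⁻¹ * (2:ℝ)^((1-q)*(n:ℝ))) / (((n:ℝ)+1)^2)) := by ring
          _ = c ^ q * (((2:ℝ)^((n:ℝ)) / (2:ℝ)^(((n:ℝ)+1)*q)) / (((n:ℝ)+1)^2)) := by rw [hkey]
          _ = c ^ q * ((2:ℝ)^((n:ℝ)) / ((2:ℝ)^(((n:ℝ)+1)*q) * (((n:ℝ)+1)^2))) := by
              rw [div_div]
      rw [step1]
      have hmono : (2:ℝ) ^ n / ((2:ℝ) ^ (((n:ℝ)+1) * q) * ((n:ℝ)+1)^2)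
          ≤ (2:ℝ) ^ n / ((dd n : ℝ)) ^ q := by
        apply div_le_div_of_nonneg_left (by positivity) hq2 ?_
        calc ((dd n : ℝ)) ^ q ≤ (2:ℝ) ^ (((n:ℝ)+1) * q) * ((n:ℝ)+1)^2 := hddq
          _ ≤ _ := le_refl _
      calc c ^ q * ((2:ℝ) ^ n / ((2:ℝ) ^ (((n:ℝ)+1) * q) * ((n:ℝ)+1)^2))
          ≤ c ^ q * ((2:ℝ) ^ n / ((dd n : ℝ)) ^ q) :=
            mul_le_mul_of_nonneg_left hmono hcq.le
        _ = (2:ℝ) ^ n * (c ^ q * (((dd n : ℝ)) ^ q)⁻¹) := by ring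
    have hC0 : C₀ ≤ K * b ^ n / (((n:ℝ)+1)^2) := by
      rw [le_div_iff₀ (by positivity : (0:ℝ) < ((n:ℝ)+1)^2)]
      calc C₀ * ((n:ℝ)+1)^2 = K * (C₀ / K * ((n:ℝ)+1)^2) := by field_simp
        _ ≤ K * b ^ n := mul_le_mul_of_nonneg_left hn hK0.le
    refine ⟨En n, ?_⟩
    have hsum_m : ∑ s ∈ En n, m s ≤ 1 := hfin (En n)
    have hA : C₀ ≤ ∑ s ∈ En n, m s ^ q := le_trans (hC0.trans hKb) hsum_low
    have hrw : ∀ s, (m s - m s ^ q) / (q - 1) = (m s ^ q - m s) / (1 - q) := by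
      intro s
      rw [show q - 1 = -(1-q) by ring, div_neg, ← neg_div, neg_sub]
    calc B ≤ ((∑ s ∈ En n, m s ^ q) - ∑ s ∈ En n, m s) / (1 - q) := by
          rw [le_div_iff₀ h1q]
          have : B * (1-q) = C₀ - 1 := by rw [hC₀]; ring
          rw [this]
          have h1 : ∑ s ∈ En n, m s ≤ 1 := hsum_m
          linarith
      _ = ∑ s ∈ En n, (m s ^ q - m s) / (1 - q) := by
          rw [← Finset.sum_sub_distrib, Finset.sum_div]
      _ = ∑ s ∈ En n, (m s - m s ^ q) / (q - 1) := by
          apply Finset.sum_congr rfl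
          intro s _
          rw [hrw s]

end Paper
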